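/- Every Wang tiling with Kari's 14-tile protoset P is aperiodic: if t : ℤ² → P satisfies the matching conditions e(t(i,j)) = w(t(i+1,j)) and n(t(i,j)) = s(t(i,j+1)) for all (i,j) ∈ ℤ², then there is no (a,b) ∈ ℤ² ∖ {(0,0)} with t(i+a, j+b) = t(i,j) for all (i,j) ∈ ℤ². -/

import Mathlib

/-- A Kari tile: north and south colors in `ℚ`, west and east colors in `ℚ × Bool`
(the Boolean tag distinguishes the two families, e.g. the colors `0` and `0'`). -/
abbrev KariTile := ℚ × ℚ × (ℚ × Bool) × (ℚ × Bool)

namespace KariTile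
def n (T : KariTile) : ℚ := T.1
def s (T : KariTile) : ℚ := T.2.1
def w (T : KariTile) : ℚ × Bool := T.2.2.1
def e (T : KariTile) : ℚ × Bool := T.2.2.2
end KariTile

/-- Kari's 14-tile protoset: the union of the 4 tiles of the family `T₂`
(multiplier 2) and the 10 tiles of the family `T_{2/3}` (multiplier 2/3). -/
def kariProtoset : Set KariTile :=
  {T | (T.w.2 = false ∧ T.e.2 = false ∧
        T.n ∈ ({0, 1} : Set ℚ) ∧ T.s ∈ ({1, 2} : Set ℚ) ∧
        T.w.1 ∈ ({-1, 0} : Set ℚ) ∧ T.e.1 ∈ ({-1, 0} : Set ℚ) ∧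
        2 * T.n + T.w.1 = T.s + T.e.1) ∨
       (T.w.2 = true ∧ T.e.2 = true ∧
        T.n ∈ ({1, 2} : Set ℚ) ∧ T.s ∈ ({0, 1, 2} : Set ℚ) ∧
        T.w.1 ∈ ({-1/3, 0, 1/3, 2/3} : Set ℚ) ∧ T.e.1 ∈ ({-1/3, 0, 1/3, 2/3} : Set ℚ) ∧
        (2/3) * T.n + T.w.1 = T.s + T.e.1)}

/-- `t : ℤ² → KariTile` is a Wang tiling with Kari's protoset. -/
def IsKariTiling (t : ℤ × ℤ → KariTile) : Prop :=
  (∀ ij : ℤ × ℤ, t ij ∈ kariProtoset) ∧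
  (∀ i j : ℤ, (t (i, j)).e = (t (i + 1, j)).w ∧ (t (i, j)).n = (t (i, j + 1)).s)

namespace KariAux

variable (t : ℤ × ℤ → KariTile)

def nv (i j : ℤ) : ℚ := (t (i, j)).n
def sv (i j : ℤ) : ℚ := (t (i, j)).s
def wv (i j : ℤ) : ℚ := (t (i, j)).w.1
def tg (j : ℤ) : Bool := (t (0, j)).w.2
def qv (j : ℤ) : ℚ := if tg t j then 2/3 else 2
def S (j lo : ℤ) (m : ℕ) : ℚ := ∑ i ∈ Finset.range m, nv t (lo + i) j

variable {t}

lemma tag_const (h : IsKariTiling t) (i j : ℤ) : (t (i, j)).w.2 = tg t j := by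
  have hwe : ∀ x : ℤ, (t (x, j)).e.2 = (t (x, j)).w.2 := by
    intro x
    rcases h.1 (x, j) with ⟨h1, h2, _⟩ | ⟨h1, h2, _⟩ <;> rw [h1, h2]
  have hstep : ∀ x : ℤ, (t (x + 1, j)).w.2 = (t (x, j)).w.2 := by
    intro x
    rw [← (h.2 x j).1, hwe]
  induction i using Int.induction_on with
  | zero => rfl
  | succ k ih => rw [hstep, ih]
  | pred k ih =>
    have := hstep (-(k : ℤ) - 1)
    rw [show -(k:ℤ) - 1 + 1 = -(k:ℤ) by ring] at this
    rw [← this]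
    exact ih

lemma tile_eq (h : IsKariTiling t) (i j : ℤ) :
    qv t j * nv t i j + wv t i j = sv t i j + wv t (i + 1) j := by
  have hw : (t (i, j)).e = (t (i + 1, j)).w := (h.2 i j).1
  have htg := tag_const h i j
  rcases h.1 (i, j) with ⟨h1, _, _, _, _, _, heq⟩ | ⟨h1, _, _, _, _, _, heq⟩
  · rw [h1] at htg
    have hq : qv t j = 2 := by rw [qv, ← htg]; simp
    rw [hq]
    simp only [nv, sv, wv, ← hw]
    exact heq
  · rw [h1] at htg
    have hq : qv t j = 2 / 3 := by rw [qv, ← htg]; simp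
    rw [hq]
    simp only [nv, sv, wv, ← hw]
    exact heq

lemma n_cases (h : IsKariTiling t) (i j : ℤ) :
    nv t i j = 0 ∨ nv t i j = 1 ∨ nv t i j = 2 := by
  rcases h.1 (i, j) with ⟨_, _, h3, _⟩ | ⟨_, _, h3, _⟩ <;>
    simp only [Set.mem_insert_iff, Set.mem_singleton_iff] at h3 <;> tauto

lemma n_nonneg (h : IsKariTiling t) (i j : ℤ) : 0 ≤ nv t i j := by
  rcases n_cases h i j with h' | h' | h' <;> rw [h'] <;> norm_num

lemma n_le_two (h : IsKariTiling t) (i j : ℤ) : nv t i j ≤ 2 := by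
  rcases n_cases h i j with h' | h' | h' <;> rw [h'] <;> norm_num

lemma w_bounds (h : IsKariTiling t) (i j : ℤ) : -1 ≤ wv t i j ∧ wv t i j ≤ 1 := by
  rcases h.1 (i, j) with ⟨_, _, _, _, h5, _⟩ | ⟨_, _, _, _, h5, _⟩ <;>
    simp only [Set.mem_insert_iff, Set.mem_singleton_iff] at h5
  · rcases h5 with h' | h' <;> rw [wv, h'] <;> norm_num
  · rcases h5 with h' | h' | h' | h' <;> rw [wv, h'] <;> norm_num

lemma s_ge_one (h : IsKariTiling t) {j : ℤ} (htag : tg t j = false) (i : ℤ) :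
    1 ≤ sv t i j := by
  have htg := tag_const h i j
  rw [htag] at htg
  rcases h.1 (i, j) with ⟨_, _, _, h4, _⟩ | ⟨h1, _⟩
  · simp only [Set.mem_insert_iff, Set.mem_singleton_iff] at h4
    rcases h4 with h' | h' <;> rw [sv, h'] <;> norm_num
  · rw [h1] at htg; exact absurd htg (by simp)

lemma n_ge_one (h : IsKariTiling t) {j : ℤ} (htag : tg t j = true) (i : ℤ) :
    1 ≤ nv t i j := by
  have htg := tag_const h i j
  rw [htag] at htg
  rcases h.1 (i, j) with ⟨h1, _⟩ | ⟨_, _, h3, _⟩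
  · rw [h1] at htg; exact absurd htg (by simp)
  · simp only [Set.mem_insert_iff, Set.mem_singleton_iff] at h3
    rcases h3 with h' | h' <;> rw [nv, h'] <;> norm_num

lemma S_eq_s (h : IsKariTiling t) (j lo : ℤ) (m : ℕ) :
    S t j lo m = ∑ i ∈ Finset.range m, sv t (lo + i) (j + 1) := by
  refine Finset.sum_congr rfl fun i _ => ?_
  exact (h.2 (lo + i) j).2

lemma step (h : IsKariTiling t) (j lo : ℤ) (m : ℕ) :
    S t j lo m = qv t (j + 1) * S t (j + 1) lo m + wv t lo (j + 1) - wv t (lo + m) (j + 1) := by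
  induction m with
  | zero => simp [S]
  | succ m ih =>
    have hv : nv t (lo + m) j = sv t (lo + m) (j + 1) := (h.2 (lo + m) j).2
    have hte := tile_eq h (lo + m) (j + 1)
    have h1 : S t j lo (m + 1) = S t j lo m + nv t (lo + m) j := by
      rw [S, Finset.sum_range_succ]; rfl
    have h2 : S t (j + 1) lo (m + 1) = S t (j + 1) lo m + nv t (lo + m) (j + 1) := by
      rw [S, Finset.sum_range_succ]; rfl
    rw [h1, h2, ih]
    have hc : lo + ((m : ℤ) + 1) = lo + m + 1 := by ring
    push_cast
    rw [hc]
    linarith [hte, hv]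

lemma S_nonneg (h : IsKariTiling t) (j lo : ℤ) (m : ℕ) : 0 ≤ S t j lo m :=
  Finset.sum_nonneg fun i _ => n_nonneg h _ _

lemma S_lb (h : IsKariTiling t) (j lo : ℤ) (m : ℕ) :
    (2 / 3) * m - 2 ≤ S t j lo m := by
  cases htag : tg t (j + 1) with
  | false =>
    have h1 : (m : ℚ) ≤ S t j lo m := by
      rw [S_eq_s h]
      calc (m : ℚ) = ∑ _i ∈ Finset.range m, (1 : ℚ) := by simp
        _ ≤ _ := Finset.sum_le_sum fun i _ => s_ge_one h htag _
    have : (0 : ℚ) ≤ m := by positivity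
    linarith
  | true =>
    have h1 : (m : ℚ) ≤ S t (j + 1) lo m := by
      calc (m : ℚ) = ∑ _i ∈ Finset.range m, (1 : ℚ) := by simp
        _ ≤ _ := Finset.sum_le_sum fun i _ => n_ge_one h htag _
    have h2 := step h j lo m
    have hq : qv t (j + 1) = 2 / 3 := by rw [qv, htag]; simp
    rw [hq] at h2
    have hw1 := w_bounds h lo (j + 1)
    have hw2 := w_bounds h (lo + m) (j + 1)
    linarith

lemma shift1 (h : IsKariTiling t) (j lo : ℤ) (m : ℕ) :
    |S t j (lo + 1) m - S t j lo m| ≤ 2 := by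
  cases m with
  | zero => simp [S]
  | succ m =>
    have h1 : S t j lo (m + 1) = nv t lo j + S t j (lo + 1) m := by
      rw [S, Finset.sum_range_succ']
      rw [add_comm]
      congr 1
      · push_cast; simp
      refine Finset.sum_congr rfl fun i _ => ?_
      have : lo + ((i : ℤ) + 1) = lo + 1 + i := by ring
      push_cast
      rw [this]
    have h2 : S t j lo (m + 1) = S t j lo m + nv t (lo + m) j := by
      rw [S, Finset.sum_range_succ]; rfl
    have h3 : S t j (lo + 1) (m + 1) = S t j (lo + 1) m + nv t (lo + 1 + m) j := by
      rw [S, Finset.sum_range_succ]; rfl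
    have hb1 := n_nonneg h lo j
    have hb2 := n_le_two h lo j
    have hb3 := n_nonneg h (lo + 1 + m) j
    have hb4 := n_le_two h (lo + 1 + m) j
    rw [abs_le]
    constructor <;> push_cast at h1 h2 h3 ⊢ <;> linarith

lemma shiftk (h : IsKariTiling t) (j lo : ℤ) (d m : ℕ) :
    |S t j (lo + d) m - S t j lo m| ≤ 2 * d := by
  induction d with
  | zero => simp
  | succ d ih =>
    have h1 := shift1 h j (lo + d) m
    calc |S t j (lo + (d + 1 : ℕ)) m - S t j lo m|
        = |(S t j (lo + d + 1) m - S t j (lo + d) m) + (S t j (lo + d) m - S t j lo m)| := by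
          push_cast; ring_nf
      _ ≤ |S t j (lo + d + 1) m - S t j (lo + d) m| + |S t j (lo + d) m - S t j lo m| :=
          abs_add_le _ _
      _ ≤ 2 + 2 * d := add_le_add h1 ih
      _ = 2 * ((d : ℚ) + 1) := by ring
      _ = 2 * ((d + 1 : ℕ) : ℚ) := by push_cast; ring

lemma S_nat (h : IsKariTiling t) (j lo : ℤ) (m : ℕ) : ∃ k : ℕ, S t j lo m = k := by
  induction m with
  | zero => exact ⟨0, by simp [S]⟩
  | succ m ih =>
    obtain ⟨k, hk⟩ := ih
    have hsum : S t j lo (m + 1) = S t j lo m + nv t (lo + m) j := by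
      rw [S, Finset.sum_range_succ]; rfl
    rcases n_cases h (lo + m) j with h' | h' | h'
    · exact ⟨k, by rw [hsum, hk, h']; ring⟩
    · exact ⟨k + 1, by rw [hsum, hk, h']; push_cast; ring⟩
    · exact ⟨k + 2, by rw [hsum, hk, h']; push_cast; ring⟩

lemma chain (h : IsKariTiling t) (J : ℕ) :
    ∃ (c d : ℕ) (C : ℚ), c + d = J ∧ 0 ≤ C ∧
      ∀ m : ℕ, |S t 0 0 m - (2 ^ c * (2 / 3) ^ d) * S t (J : ℤ) 0 m| ≤ C := by
  induction J with
  | zero => exact ⟨0, 0, 0, rfl, le_refl _, fun m => by simp⟩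
  | succ J ih =>
    obtain ⟨c, d, C, hcd, hC, hb⟩ := ih
    set Q : ℚ := 2 ^ c * (2 / 3) ^ d with hQdef
    have hQpos : 0 < Q := by positivity
    have hstep := fun m => step h (J : ℤ) 0 m
    have hwb : ∀ m : ℕ, |wv t 0 ((J : ℤ) + 1) - wv t (0 + (m : ℤ)) ((J : ℤ) + 1)| ≤ 2 := by
      intro m
      have h1 := w_bounds h 0 ((J : ℤ) + 1)
      have h2 := w_bounds h (0 + (m : ℤ)) ((J : ℤ) + 1)
      rw [abs_le]; constructor <;> linarith
    cases htag : tg t ((J : ℤ) + 1) with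
    | false =>
      have hq : qv t ((J : ℤ) + 1) = 2 := by rw [qv, htag]; simp
      refine ⟨c + 1, d, C + 2 * Q, by omega, by positivity, fun m => ?_⟩
      have hs := hstep m
      rw [hq] at hs
      have key : S t 0 0 m - (2 ^ (c + 1) * (2 / 3) ^ d) * S t ((J : ℤ) + 1) 0 m
          = (S t 0 0 m - Q * S t (J : ℤ) 0 m)
            + Q * (wv t 0 ((J : ℤ) + 1) - wv t (0 + (m : ℤ)) ((J : ℤ) + 1)) := by
        rw [hs]; ring
      rw [show ((J + 1 : ℕ) : ℤ) = (J : ℤ) + 1 by push_cast; ring, key]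
      calc _ ≤ |S t 0 0 m - Q * S t (J : ℤ) 0 m|
            + |Q * (wv t 0 ((J : ℤ) + 1) - wv t (0 + (m : ℤ)) ((J : ℤ) + 1))| := abs_add_le _ _
        _ ≤ C + 2 * Q := by
            refine add_le_add (hb m) ?_
            rw [abs_mul, abs_of_pos hQpos]
            calc Q * |wv t 0 ((J : ℤ) + 1) - wv t (0 + (m : ℤ)) ((J : ℤ) + 1)|
                ≤ Q * 2 := by
                  exact mul_le_mul_of_nonneg_left (hwb m) (le_of_lt hQpos)
              _ = 2 * Q := by ring
    | true =>
      have hq : qv t ((J : ℤ) + 1) = 2 / 3 := by rw [qv, htag]; simp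
      refine ⟨c, d + 1, C + 2 * Q, by omega, by positivity, fun m => ?_⟩
      have hs := hstep m
      rw [hq] at hs
      have key : S t 0 0 m - (2 ^ c * (2 / 3) ^ (d + 1)) * S t ((J : ℤ) + 1) 0 m
          = (S t 0 0 m - Q * S t (J : ℤ) 0 m)
            + Q * (wv t 0 ((J : ℤ) + 1) - wv t (0 + (m : ℤ)) ((J : ℤ) + 1)) := by
        rw [hs]; ring
      rw [show ((J + 1 : ℕ) : ℤ) = (J : ℤ) + 1 by push_cast; ring, key]
      calc _ ≤ |S t 0 0 m - Q * S t (J : ℤ) 0 m|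
            + |Q * (wv t 0 ((J : ℤ) + 1) - wv t (0 + (m : ℤ)) ((J : ℤ) + 1))| := abs_add_le _ _
        _ ≤ C + 2 * Q := by
            refine add_le_add (hb m) ?_
            rw [abs_mul, abs_of_pos hQpos]
            calc Q * |wv t 0 ((J : ℤ) + 1) - wv t (0 + (m : ℤ)) ((J : ℤ) + 1)|
                ≤ Q * 2 := by
                  exact mul_le_mul_of_nonneg_left (hwb m) (le_of_lt hQpos)
              _ = 2 * Q := by ring

lemma Q_ne_one {c d : ℕ} (hpos : 0 < c + d) : (2 : ℚ) ^ c * (2 / 3) ^ d ≠ 1 := by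
  intro hQ
  rw [div_pow] at hQ
  have h3 : (3 : ℚ) ^ d ≠ 0 := by positivity
  have hQ' : (2 : ℚ) ^ (c + d) = 3 ^ d := by
    rw [pow_add]
    field_simp at hQ
    linarith
  have hN : (2 : ℕ) ^ (c + d) = 3 ^ d := by exact_mod_cast hQ'
  have heven : Even ((2 : ℕ) ^ (c + d)) := by
    rw [Nat.even_pow]
    exact ⟨even_two, by omega⟩
  rw [hN, Nat.even_pow] at heven
  rcases heven with ⟨h3e, hd⟩
  exact absurd h3e (by decide)

end KariAux

open KariAux

/-- Every Wang tiling with Kari's 14-tile protoset is aperiodic. -/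
theorem stmt4 (t : ℤ × ℤ → KariTile) (ht : IsKariTiling t) :
    ¬ ∃ ab : ℤ × ℤ, ab ≠ (0, 0) ∧
      ∀ i j : ℤ, t (i + ab.1, j + ab.2) = t (i, j) := by
  rintro ⟨⟨a, b⟩, hne, hper⟩
  dsimp only at hper
  have hper' : ∀ i j : ℤ, t (i - a, j - b) = t (i, j) := by
    intro i j
    have := hper (i - a) (j - b)
    rw [show i - a + a = i by ring, show j - b + b = j by ring] at this
    exact this.symm
  by_cases hb : b = 0
  · -- horizontal period: 2-adic descent on integer row sums
    subst hb
    have ha : a ≠ 0 := by rintro rfl; exact hne rfl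
    set aN : ℕ := a.natAbs with haNdef
    have haN1 : 1 ≤ aN := by
      have := Int.natAbs_pos.mpr ha; omega
    have hpA : ∀ i j : ℤ, t (i + (aN : ℤ), j) = t (i, j) := by
      intro i j
      rcases lt_or_gt_of_ne ha with h0 | h0
      · have := hper' i j
        rw [show i - a = i + (aN : ℤ) by omega, show j - 0 = j by ring] at this
        exact this
      · have := hper i j
        rw [show i + a = i + (aN : ℤ) by omega, show j + 0 = j by ring] at this
        exact this
    have key : ∀ j : ℤ, S t j 0 aN = qv t (j + 1) * S t (j + 1) 0 aN := by
      intro j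
      have hs := step ht j 0 aN
      have hw : wv t (0 + (aN : ℤ)) (j + 1) = wv t 0 (j + 1) := by
        unfold KariAux.wv
        rw [hpA 0 (j + 1)]
      rw [hw] at hs
      linarith
    have pos0 : 0 < S t 0 0 aN := by
      cases htag : tg t (0 + 1) with
      | false =>
        have h1 : (aN : ℚ) ≤ S t 0 0 aN := by
          rw [S_eq_s ht]
          calc (aN : ℚ) = ∑ _i ∈ Finset.range aN, (1 : ℚ) := by simp
            _ ≤ _ := Finset.sum_le_sum fun i _ => s_ge_one ht htag _
        have : (1 : ℚ) ≤ (aN : ℚ) := by exact_mod_cast haN1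
        linarith
      | true =>
        have h1 : (aN : ℚ) ≤ S t (0 + 1) 0 aN := by
          calc (aN : ℚ) = ∑ _i ∈ Finset.range aN, (1 : ℚ) := by simp
            _ ≤ _ := Finset.sum_le_sum fun i _ => n_ge_one ht htag _
        have hk := key 0
        have hq : qv t (0 + 1) = 2 / 3 := by rw [KariAux.qv, htag]; simp
        rw [hq] at hk
        have : (1 : ℚ) ≤ (aN : ℚ) := by exact_mod_cast haN1
        have hx : (1 : ℚ) ≤ S t (0 + 1) 0 aN := le_trans this h1
        rw [hk, show (0 : ℤ) + 1 = 1 from by ring]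
        rw [show (0 : ℤ) + 1 = 1 from by ring] at hx
        linarith
    have descent : ∀ v : ℕ, ∀ j : ℤ, ∀ k : ℕ, S t j 0 aN = (k : ℚ) → 2 ^ v ∣ k := by
      intro v
      induction v with
      | zero => intro j k _; simpa using one_dvd k
      | succ v ihv =>
        intro j k hk
        obtain ⟨k', hk'⟩ := S_nat ht (j + 1) 0 aN
        have hkey := key j
        rw [hk, hk'] at hkey
        have hd := ihv (j + 1) k' hk'
        cases htag : tg t (j + 1) with
        | false =>
          have hq : qv t (j + 1) = 2 := by rw [KariAux.qv, htag]; simp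
          rw [hq] at hkey
          have hkn : k = 2 * k' := by exact_mod_cast hkey
          obtain ⟨u, hu⟩ := hd
          exact ⟨u, by rw [hkn, hu, pow_succ]; ring⟩
        | true =>
          have hq : qv t (j + 1) = 2 / 3 := by rw [KariAux.qv, htag]; simp
          rw [hq] at hkey
          have hkn : 3 * k = 2 * k' := by
            have : (3 : ℚ) * k = 2 * k' := by rw [hkey]; ring
            exact_mod_cast this
          have hdvd : 2 ^ (v + 1) ∣ 3 * k := by
            rw [hkn]
            obtain ⟨u, hu⟩ := hd
            exact ⟨u, by rw [hu, pow_succ]; ring⟩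
          have hcop : Nat.Coprime (2 ^ (v + 1)) 3 := Nat.Coprime.pow_left _ (by decide)
          exact hcop.dvd_of_dvd_mul_left hdvd
    obtain ⟨k0, hk0⟩ := S_nat ht 0 0 aN
    have hk0pos : 0 < k0 := by
      rw [hk0] at pos0; exact_mod_cast pos0
    have h1 := Nat.le_of_dvd hk0pos (descent k0 0 k0 hk0)
    have h2 := Nat.lt_two_pow_self (n := k0)
    omega
  · -- vertical component: growth argument
    obtain ⟨a1, b1, hb1, hp1⟩ : ∃ a1 b1 : ℤ, 0 < b1 ∧ ∀ i j : ℤ, t (i + a1, j + b1) = t (i, j) := by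
      rcases lt_or_gt_of_ne hb with h0 | h0
      · refine ⟨-a, -b, by omega, fun i j => ?_⟩
        have := hper' i j
        rwa [sub_eq_add_neg, sub_eq_add_neg] at this
      · exact ⟨a, b, h0, hper⟩
    set bN : ℕ := b1.toNat with hbNdef
    have hbN : (bN : ℤ) = b1 := Int.toNat_of_nonneg hb1.le
    have hbN1 : 0 < bN := by omega
    obtain ⟨c, d, C, hcd, hC, hbound⟩ := chain ht bN
    set Q : ℚ := 2 ^ c * (2 / 3) ^ d with hQdef
    have hQpos : 0 < Q := by positivity
    have hQ1 : Q ≠ 1 := Q_ne_one (by omega)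
    have hrow : ∀ m : ℕ, S t (bN : ℤ) 0 m = S t 0 (-a1) m := by
      intro m
      unfold KariAux.S
      refine Finset.sum_congr rfl fun i _ => ?_
      unfold KariAux.nv
      have hq := hp1 (-a1 + (i : ℤ)) 0
      rw [show -a1 + (i : ℤ) + a1 = 0 + (i : ℤ) by ring, show (0 : ℤ) + b1 = b1 by ring] at hq
      rw [hbN, hq]
    have hshift : ∀ m : ℕ, |S t 0 (-a1) m - S t 0 0 m| ≤ 2 * (a1.natAbs : ℚ) := by
      intro m
      rcases le_or_gt 0 a1 with h0 | h0
      · have hs := shiftk ht 0 (-a1) a1.natAbs m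
        rw [show -a1 + (a1.natAbs : ℤ) = 0 by omega] at hs
        rw [abs_sub_comm]
        exact_mod_cast hs
      · have hs := shiftk ht 0 0 a1.natAbs m
        rw [show (0 : ℤ) + (a1.natAbs : ℤ) = -a1 by omega] at hs
        exact_mod_cast hs
    set C' : ℚ := C + Q * (2 * (a1.natAbs : ℚ)) with hC'def
    have hmain : ∀ m : ℕ, |1 - Q| * S t 0 0 m ≤ C' := by
      intro m
      have h1 := hbound m
      have h2 := hshift m
      have h3 := hrow m
      have hSnn := S_nonneg ht 0 0 m
      calc |1 - Q| * S t 0 0 m = |(1 - Q) * S t 0 0 m| := by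
            rw [abs_mul, abs_of_nonneg hSnn]
        _ = |(S t 0 0 m - Q * S t (bN : ℤ) 0 m) + Q * (S t 0 (-a1) m - S t 0 0 m)| := by
            congr 1
            rw [h3]
            ring
        _ ≤ |S t 0 0 m - Q * S t (bN : ℤ) 0 m| + |Q * (S t 0 (-a1) m - S t 0 0 m)| :=
            abs_add_le _ _
        _ ≤ C + Q * (2 * (a1.natAbs : ℚ)) := by
            refine add_le_add h1 ?_
            rw [abs_mul, abs_of_pos hQpos]
            exact mul_le_mul_of_nonneg_left h2 hQpos.le
    have heps : 0 < |1 - Q| := abs_pos.mpr (sub_ne_zero.mpr (Ne.symm hQ1))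
    obtain ⟨m, hm⟩ := exists_nat_gt ((3 / 2) * (C' / |1 - Q| + 2) + 3)
    have hg := S_lb ht 0 0 m
    have h1 := hmain m
    have h2 : C' / |1 - Q| < (2 / 3) * m - 2 := by linarith
    have h3 : C' < |1 - Q| * ((2 / 3) * m - 2) := by
      rw [div_lt_iff₀ heps] at h2
      linarith
    have h4 : |1 - Q| * ((2 / 3) * m - 2) ≤ |1 - Q| * S t 0 0 m :=
      mul_le_mul_of_nonneg_left hg heps.le
    linarith
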